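/- Let k ≥ 1 be an integer, ε := 1/((k + 1/2)·π) (so that 0 < π·ε < 1), let B ≤ π/2 and ω̃ be real, and suppose (−1)^k·B·cos(ω̃) = cos²(π·ε·ω̃/2). Then the real part of ∂ψ/∂μ at μ = i·ω̃, namely Re(−ε·B + (−1)^k·B·exp(−i·ω̃) − (π/2)·ε·exp(−i·π·ε·ω̃)), equals ε·(π/2 − B) + (1 − π·ε)·cos²(π·ε·ω̃/2); in particular it is strictly positive whenever B < π/2 or cos(π·ε·ω̃/2) ≠ 0. Hence every such purely imaginary eigenvalue is an algebraically simple root of ψ(·, ε, B). -/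

import Mathlib

open Real

/-- Real part of `∂ψ/∂μ` at a purely imaginary eigenvalue `μ = iω̃`: it equals
`ε(π/2 - B) + (1 - πε) cos²(πεω̃/2)` and is strictly positive whenever `B < π/2` or
`cos(πεω̃/2) ≠ 0`; hence such eigenvalues are algebraically simple. -/
theorem stmt_18 (k : ℕ) (hk : 1 ≤ k) (ε B ωt : ℝ)
    (hε : ε = 1/(((k : ℝ)+1/2)*π)) (hB : B ≤ π/2)
    (h : (-1:ℝ)^k * B * Real.cos ωt = (Real.cos (π*ε*ωt/2))^2) :
    (-(ε:ℂ)*(B:ℂ) + (-1:ℂ)^k*(B:ℂ)*Complex.exp (-(Complex.I*(ωt:ℂ)))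
      - ((π/2 : ℝ):ℂ)*(ε:ℂ)*Complex.exp (-(Complex.I*((π*ε*ωt : ℝ):ℂ)))).re
      = ε*(π/2 - B) + (1 - π*ε)*(Real.cos (π*ε*ωt/2))^2 ∧
    ((B < π/2 ∨ Real.cos (π*ε*ωt/2) ≠ 0) →
      0 < ε*(π/2 - B) + (1 - π*ε)*(Real.cos (π*ε*ωt/2))^2) := by
  have hcast : ((-1:ℂ))^k = (((-1:ℝ)^k : ℝ) : ℂ) := by push_cast; ring
  have hcos : Real.cos (π*ε*ωt) = 2 * (Real.cos (π*ε*ωt/2))^2 - 1 := by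
    have := Real.cos_sq (π*ε*ωt/2)
    have h2 : 2 * (π*ε*ωt/2) = π*ε*ωt := by ring
    rw [h2] at this
    nlinarith [this]
  have hre : (-(ε:ℂ)*(B:ℂ) + (-1:ℂ)^k*(B:ℂ)*Complex.exp (-(Complex.I*(ωt:ℂ)))
      - ((π/2 : ℝ):ℂ)*(ε:ℂ)*Complex.exp (-(Complex.I*((π*ε*ωt : ℝ):ℂ)))).re
      = -ε*B + (-1:ℝ)^k*B*Real.cos ωt - (π/2)*ε*Real.cos (π*ε*ωt) := by
    have h1 : ((-1:ℂ)^k).re = (-1:ℝ)^k := by rw [hcast]; simp only [Complex.ofReal_re]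
    have h2 : ((-1:ℂ)^k).im = 0 := by rw [hcast]; simp only [Complex.ofReal_im]
    simp [Complex.exp_re, Complex.exp_im, Complex.sub_re, Complex.add_re,
      Complex.mul_re, Complex.mul_im, Real.cos_neg, Real.sin_neg, h1, h2]
  constructor
  · rw [hre, h, hcos]; ring
  · have hπ : (0:ℝ) < π := Real.pi_pos
    have hεpos : 0 < ε := by
      rw [hε]; positivity
    have hπε : π*ε ≤ 2/3 := by
      rw [hε]
      have hk1 : (1:ℝ) ≤ (k:ℝ) := by exact_mod_cast hk
      have heq : π * (1/(((k:ℝ)+1/2)*π)) = 1/((k:ℝ)+1/2) := by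
        field_simp
      rw [heq, div_le_div_iff₀ (by linarith) (by norm_num)]
      linarith
    rintro (hlt | hne)
    · nlinarith [sq_nonneg (Real.cos (π*ε*ωt/2))]
    · have : 0 < (Real.cos (π*ε*ωt/2))^2 := by positivity
      nlinarith
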